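/- arXiv:1704.03192 — 2 statements merged into one kernel-verified Lean document; each statement's English description precedes it below -/
import Mathlib

section
/- Let M be an n×n real matrix, A an invertible n×n matrix, and Σ a symmetric positive definite n×n matrix. If the partial sums S_k = Σ_{ℓ=0}^{k-1} M^ℓ A Σ Aᵀ (M^ℓ)ᵀ converge (entrywise) to a finite matrix as k → ∞, then ρ(M) < 1. -/
open Matrix Filter Finset

noncomputable def specRad {m : Type*} [Fintype m] [DecidableEq m] (M : Matrix m m ℝ) : ℝ :=
  sSup ((fun z : ℂ => ‖z‖) '' spectrum ℂ (M.map (algebraMap ℝ ℂ)))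

def RowStochastic {m : Type*} [Fintype m] (M : Matrix m m ℝ) : Prop :=
  (∀ i j, 0 ≤ M i j) ∧ ∀ i, ∑ j, M i j = 1

section aux

variable {n : ℕ}

private lemma mulVec_pow_eig {μ : ℂ} {B : Matrix (Fin n) (Fin n) ℂ} {v : Fin n → ℂ}
    (hv : B *ᵥ v = μ • v) (ℓ : ℕ) : (B ^ ℓ) *ᵥ v = μ ^ ℓ • v := by
  induction ℓ with
  | zero => simp
  | succ k ih =>
    rw [pow_succ, ← mulVec_mulVec, hv, mulVec_smul, ih, smul_smul, pow_succ, mul_comm]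

private lemma conjTranspose_map_complex (B : Matrix (Fin n) (Fin n) ℝ) :
    (B.map (algebraMap ℝ ℂ))ᴴ = (B.map (algebraMap ℝ ℂ))ᵀ := by
  ext i j
  simp [conjTranspose_apply, Complex.conj_ofReal]

private lemma map_pow_complex (B : Matrix (Fin n) (Fin n) ℝ) (k : ℕ) :
    (B ^ k).map (algebraMap ℝ ℂ) = (B.map (algebraMap ℝ ℂ)) ^ k := by
  induction k with
  | zero =>
    ext i j
    by_cases h : i = j <;> simp [pow_zero, Matrix.map_apply, Matrix.one_apply, h]
  | succ m ih => rw [pow_succ, pow_succ, Matrix.map_mul, ih]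

private lemma re_quad (Q : Matrix (Fin n) (Fin n) ℝ) (v : Fin n → ℂ) :
    (star v ⬝ᵥ (Q.map (algebraMap ℝ ℂ)) *ᵥ v).re
      = (fun i => (v i).re) ⬝ᵥ Q *ᵥ (fun i => (v i).re)
        + (fun i => (v i).im) ⬝ᵥ Q *ᵥ (fun i => (v i).im) := by
  simp only [dotProduct, mulVec, Complex.re_sum]
  rw [← Finset.sum_add_distrib]
  refine Finset.sum_congr rfl fun i _ => ?_
  have h1 : (∑ j, ((Q.map (algebraMap ℝ ℂ)) i j * v j)).re = ∑ j, Q i j * (v j).re := by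
    rw [Complex.re_sum]
    exact Finset.sum_congr rfl fun j _ => by
      simp [Matrix.map_apply, Complex.mul_re]
  have h2 : (∑ j, ((Q.map (algebraMap ℝ ℂ)) i j * v j)).im = ∑ j, Q i j * (v j).im := by
    rw [Complex.im_sum]
    exact Finset.sum_congr rfl fun j _ => by
      simp [Matrix.map_apply, Complex.mul_im]
  simp only [Pi.star_apply, Complex.mul_re, Complex.star_def, Complex.conj_re, Complex.conj_im,
    h1, h2]
  ring

end aux

theorem stmt7 {n : ℕ} (M A Sig : Matrix (Fin n) (Fin n) ℝ)
    (hA : IsUnit A) (hSig : Sig.PosDef)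
    (hconv : ∃ L : Matrix (Fin n) (Fin n) ℝ,
      Tendsto (fun k => ∑ ℓ ∈ Finset.range k, M ^ ℓ * (A * Sig * Aᵀ) * (M ^ ℓ)ᵀ)
        atTop (nhds L)) :
    specRad M < 1 := by
  classical
  set Q : Matrix (Fin n) (Fin n) ℝ := A * Sig * Aᵀ with hQdef
  -- Q is positive definite (as a real quadratic form)
  have hAdet : IsUnit A.det := (Matrix.isUnit_iff_isUnit_det A).mp hA
  have hAt : IsUnit Aᵀ.det := by rwa [Matrix.det_transpose]
  have hQpos : ∀ x : Fin n → ℝ, x ≠ 0 → 0 < x ⬝ᵥ Q *ᵥ x := by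
    intro x hx
    have hy : Aᵀ *ᵥ x ≠ 0 := by
      intro h
      apply hx
      have h2 : (Aᵀ)⁻¹ *ᵥ (Aᵀ *ᵥ x) = x := by
        rw [mulVec_mulVec, Matrix.nonsing_inv_mul _ hAt, one_mulVec]
      rw [h, mulVec_zero] at h2
      exact h2.symm
    have hpos := hSig.dotProduct_mulVec_pos hy
    simp only [star_trivial] at hpos
    calc (0:ℝ) < (Aᵀ *ᵥ x) ⬝ᵥ Sig *ᵥ (Aᵀ *ᵥ x) := hpos
      _ = x ⬝ᵥ Q *ᵥ x := by
          rw [hQdef, ← mulVec_mulVec, ← mulVec_mulVec, dotProduct_mulVec, mulVec_transpose,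
            dotProduct_mulVec, dotProduct_mulVec]
  have hQsemi : ∀ x : Fin n → ℝ, 0 ≤ x ⬝ᵥ Q *ᵥ x := by
    intro x
    by_cases hx : x = 0
    · simp [hx]
    · exact (hQpos x hx).le
  -- terms of the convergent series tend to 0
  set t : ℕ → Matrix (Fin n) (Fin n) ℝ := fun ℓ => M ^ ℓ * Q * (M ^ ℓ)ᵀ with htdef
  have ht0 : Tendsto t atTop (nhds 0) := by
    obtain ⟨L, hL⟩ := hconv
    have h1 : Tendsto (fun k => ∑ ℓ ∈ Finset.range (k + 1), t ℓ) atTop (nhds L) :=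
      hL.comp (tendsto_add_atTop_nat 1)
    have h2 := h1.sub hL
    simp only [sub_self] at h2
    convert h2 using 2 with k
    rw [Finset.sum_range_succ]
    abel
  -- the complexified matrices
  set Mc : Matrix (Fin n) (Fin n) ℂ := M.map (algebraMap ℝ ℂ) with hMc
  set Qc : Matrix (Fin n) (Fin n) ℂ := Q.map (algebraMap ℝ ℂ) with hQc
  have hMcH : Mcᴴ = Mcᵀ := conjTranspose_map_complex M
  -- every spectral value has modulus < 1
  have key : ∀ μ ∈ spectrum ℂ Mc, ‖μ‖ < 1 := by
    intro μ hμ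
    -- μ is in the spectrum of Mcᵀ
    have hμt : μ ∈ spectrum ℂ Mcᵀ := by
      rw [spectrum.mem_iff] at hμ ⊢
      intro hcon
      apply hμ
      rw [Matrix.isUnit_iff_isUnit_det] at hcon ⊢
      rw [← Matrix.det_transpose]
      convert hcon using 2
      rw [Matrix.transpose_sub]
      congr 1
      ext i j
      by_cases h : i = j
      · subst h; simp
      · simp [Matrix.transpose_apply, Matrix.algebraMap_matrix_apply, h, Ne.symm h]
    -- get an eigenvector of Mcᵀ
    have hev : Module.End.HasEigenvalue (Matrix.toLinAlgEquiv' Mcᵀ) μ := by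
      rw [Module.End.hasEigenvalue_iff_mem_spectrum]
      rwa [AlgEquiv.spectrum_eq Matrix.toLinAlgEquiv' Mcᵀ]
    obtain ⟨v, hv⟩ := hev.exists_hasEigenvector
    have hveq : Mcᵀ *ᵥ v = μ • v := by
      have h := hv.apply_eq_smul
      rwa [Matrix.toLinAlgEquiv'_apply] at h
    have hvne : v ≠ 0 := hv.right
    -- the quadratic form value
    set c : ℂ := star v ⬝ᵥ Qc *ᵥ v with hc
    have hcre : 0 < c.re := by
      rw [hc, hQc, re_quad]
      set x : Fin n → ℝ := fun i => (v i).re with hxdef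
      set y : Fin n → ℝ := fun i => (v i).im with hydef
      have hxy : x ≠ 0 ∨ y ≠ 0 := by
        by_contra h
        push_neg at h
        apply hvne
        funext i
        have hx := congrFun h.1 i
        have hy := congrFun h.2 i
        exact Complex.ext hx hy
      rcases hxy with hx | hy
      · exact add_pos_of_pos_of_nonneg (hQpos x hx) (hQsemi y)
      · exact add_pos_of_nonneg_of_pos (hQsemi x) (hQpos y hy)
    have hcne : c ≠ 0 := fun h => by simp [h] at hcre
    -- scalar sequence extracted from t
    have hscal : ∀ ℓ, star v ⬝ᵥ ((t ℓ).map (algebraMap ℝ ℂ)) *ᵥ v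
        = ((Complex.normSq μ : ℂ)) ^ ℓ * c := by
      intro ℓ
      have hmap : (t ℓ).map (algebraMap ℝ ℂ) = Mc ^ ℓ * Qc * (Mc ^ ℓ)ᵀ := by
        rw [htdef]
        simp only [Matrix.map_mul]
        rw [Matrix.transpose_map, map_pow_complex]
      have hpowH : (Mc ^ ℓ)ᴴ = (Mc ^ ℓ)ᵀ := by
        rw [conjTranspose_pow, hMcH, ← transpose_pow]
      have hT : (Mc ^ ℓ)ᵀ *ᵥ v = μ ^ ℓ • v := by
        rw [transpose_pow]
        exact mulVec_pow_eig hveq ℓ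
      have hL : star v ᵥ* (Mc ^ ℓ) = star (μ ^ ℓ • v) := by
        have hHH : ((Mc ^ ℓ)ᵀ)ᴴ = Mc ^ ℓ := by
          rw [← hpowH, conjTranspose_conjTranspose]
        rw [← hT, star_mulVec, hHH]
      have expand : star v ⬝ᵥ (Mc ^ ℓ * Qc * (Mc ^ ℓ)ᵀ) *ᵥ v
          = (star v ᵥ* (Mc ^ ℓ)) ⬝ᵥ Qc *ᵥ ((Mc ^ ℓ)ᵀ *ᵥ v) := by
        rw [← mulVec_mulVec, ← mulVec_mulVec, dotProduct_mulVec]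
      rw [hmap, expand, hT, hL, star_smul, smul_dotProduct, mulVec_smul, dotProduct_smul,
        ← hc]
      rw [smul_eq_mul, smul_eq_mul, ← mul_assoc, star_pow, ← mul_pow]
      congr 2
      rw [show (star μ) = (starRingEnd ℂ) μ from rfl, ← Complex.normSq_eq_conj_mul_self]
    -- the scalar sequence tends to 0
    have hcont : Continuous
        (fun T : Matrix (Fin n) (Fin n) ℝ => star v ⬝ᵥ (T.map (algebraMap ℝ ℂ)) *ᵥ v) := by
      simp only [dotProduct, mulVec]
      refine continuous_finset_sum _ fun i _ => Continuous.mul continuous_const ?_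
      refine continuous_finset_sum _ fun j _ => Continuous.mul ?_ continuous_const
      exact Complex.continuous_ofReal.comp ((continuous_apply j).comp (continuous_apply i))
    have hf0 : Tendsto (fun ℓ => star v ⬝ᵥ ((t ℓ).map (algebraMap ℝ ℂ)) *ᵥ v)
        atTop (nhds 0) := by
      have h := (hcont.tendsto 0).comp ht0
      simpa [Function.comp_def] using h
    have hpow0 : Tendsto (fun ℓ => ((Complex.normSq μ : ℂ)) ^ ℓ) atTop (nhds 0) := by
      have h2 : Tendsto (fun ℓ => ((Complex.normSq μ : ℂ)) ^ ℓ * c) atTop (nhds 0) := by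
        refine hf0.congr fun ℓ => (hscal ℓ)
      have h3 := h2.mul_const c⁻¹
      simp only [zero_mul] at h3
      refine h3.congr fun ℓ => ?_
      rw [mul_assoc, mul_inv_cancel₀ hcne, mul_one]
    have hns : Tendsto (fun ℓ => (Complex.normSq μ) ^ ℓ) atTop (nhds 0) := by
      have h := hpow0.norm
      simp only [norm_zero] at h
      refine h.congr fun ℓ => ?_
      rw [norm_pow, Complex.norm_real, Real.norm_eq_abs, abs_of_nonneg (Complex.normSq_nonneg μ)]
    have hlt : Complex.normSq μ < 1 := by
      have := (tendsto_pow_atTop_nhds_zero_iff).mp hns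
      calc Complex.normSq μ ≤ |Complex.normSq μ| := le_abs_self _
        _ < 1 := this
    have hsq : ‖μ‖ ^ 2 < 1 := by rw [Complex.sq_norm]; exact hlt
    nlinarith [norm_nonneg μ]
  -- conclude about the supremum
  rw [specRad, ← hMc]
  have hfin : ((fun z : ℂ => ‖z‖) '' spectrum ℂ Mc).Finite :=
    (Matrix.finite_spectrum Mc).image _
  by_cases hne : ((fun z : ℂ => ‖z‖) '' spectrum ℂ Mc).Nonempty
  · have hmem := hne.csSup_mem hfin
    obtain ⟨μ, hμ, heq⟩ := hmem
    rw [← heq]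
    exact key μ hμ
  · rw [Set.not_nonempty_iff_eq_empty] at hne
    rw [hne, Real.sSup_empty]
    norm_num
end

section
/- Let M be an n×n real matrix with ρ(M) < 1, P an N×N irreducible aperiodic stochastic matrix with stationary distribution π*, a ∈ ℝ^n, and for each state i in 𝒩 = {0,1}^n let diag(i) be the corresponding diagonal 0/1 matrix. Then μ(k) := M^k μ(0) + Σ_{ℓ=0}^{k-1} M^{k-1-ℓ} ((π(0)P^ℓ) ⊗ I_n) S converges as k → ∞ to (I - M)^{-1} Σ_{i∈𝒩} π*_i diag(i) a, where S is the stacked vector with blocks diag(i)a, for any initial distribution π(0) and any μ(0) ∈ ℝ^n. -/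
open Matrix Filter Finset MeasureTheory

open scoped ENNReal NNReal Topology

section A
variable {n : ℕ}
attribute [local instance] Matrix.linftyOpNormedAddCommGroup Matrix.linftyOpNormedRing
  Matrix.linftyOpNormedAlgebra

lemma normMapAlg (A : Matrix (Fin n) (Fin n) ℝ) : ‖A.map (algebraMap ℝ ℂ)‖ = ‖A‖ := by
  rw [Matrix.linfty_opNorm_def, Matrix.linfty_opNorm_def]
  congr 1
  refine Finset.sup_congr rfl fun i _ => ?_
  refine Finset.sum_congr rfl fun j _ => ?_
  simp [Matrix.map_apply, Complex.nnnorm_real]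

lemma stepA (hn : 0 < n) (M : Matrix (Fin n) (Fin n) ℝ) (hM : specRad M < 1) :
    ∃ C r : ℝ, 0 < C ∧ 0 < r ∧ r < 1 ∧ ∀ k : ℕ, ‖M ^ k‖ ≤ C * r ^ k := by
  haveI : Nonempty (Fin n) := ⟨⟨0, hn⟩⟩
  haveI : CompleteSpace (Matrix (Fin n) (Fin n) ℂ) := FiniteDimensional.complete ℂ _
  set M' := M.map (algebraMap ℝ ℂ) with hM'
  -- spectrum facts
  have hne : (spectrum ℂ M').Nonempty := spectrum.nonempty M'
  have hbdd : BddAbove ((fun z : ℂ => ‖z‖) '' spectrum ℂ M') :=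
    ((spectrum.isCompact M').image continuous_norm).bddAbove
  set s := specRad M with hs
  have hs0 : 0 ≤ s := by
    obtain ⟨z, hz⟩ := hne
    exact le_trans (norm_nonneg z) (le_csSup hbdd ⟨z, hz, rfl⟩)
  set r : ℝ := (s + 1) / 2 with hr
  have hsr : s < r := by rw [hr]; linarith
  have hr1 : r < 1 := by rw [hr]; linarith
  have hr0 : 0 < r := by rw [hr]; linarith
  have hlt : ∀ z ∈ spectrum ℂ M', ‖z‖₊ < r.toNNReal := by
    intro z hz
    have h1 : ‖z‖ ≤ s := le_csSup hbdd ⟨z, hz, rfl⟩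
    have : (‖z‖₊ : ℝ) < r := by
      rw [coe_nnnorm]; exact lt_of_le_of_lt h1 hsr
    rwa [← Real.coe_toNNReal r hr0.le, NNReal.coe_lt_coe] at this
  have hsrad : spectralRadius ℂ M' < (r.toNNReal : ℝ≥0∞) :=
    spectrum.spectralRadius_lt_of_forall_lt M' hlt
  have hev := (spectrum.pow_nnnorm_pow_one_div_tendsto_nhds_spectralRadius
    M').eventually_lt_const hsrad
  obtain ⟨K, hK⟩ := eventually_atTop.mp hev
  set K' := max K 1 with hK'
  have key : ∀ k, K' ≤ k → ‖M' ^ k‖ ≤ r ^ k := by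
    intro k hk
    have hk1 : 1 ≤ k := le_trans (le_max_right _ _) hk
    have hkK : K ≤ k := le_trans (le_max_left _ _) hk
    have h := hK k hkK
    have hkR : (0:ℝ) < (k:ℝ) := by exact_mod_cast hk1
    have h2 := ENNReal.rpow_lt_rpow h hkR
    rw [← ENNReal.rpow_mul, one_div, inv_mul_cancel₀ hkR.ne', ENNReal.rpow_one,
      ENNReal.rpow_natCast] at h2
    have h3 : ‖M' ^ k‖₊ ≤ r.toNNReal ^ k := by
      have := h2.le
      rwa [← ENNReal.coe_pow, ENNReal.coe_le_coe] at this
    calc ‖M' ^ k‖ = ((‖M' ^ k‖₊ : ℝ≥0) : ℝ) := (coe_nnnorm _).symm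
      _ ≤ ((r.toNNReal ^ k : ℝ≥0) : ℝ) := by exact_mod_cast h3
      _ = r ^ k := by push_cast [Real.coe_toNNReal r hr0.le]; ring
  set C : ℝ := (∑ k ∈ Finset.range K', ‖M' ^ k‖ / r ^ k) + 1 with hC
  have hC1 : 1 ≤ C := by
    rw [hC]
    have : 0 ≤ ∑ k ∈ Finset.range K', ‖M' ^ k‖ / r ^ k :=
      Finset.sum_nonneg fun k _ => div_nonneg (norm_nonneg _) (pow_nonneg hr0.le _)
    linarith
  refine ⟨C, r, lt_of_lt_of_le one_pos hC1, hr0, hr1, fun k => ?_⟩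
  have hmap : ‖M ^ k‖ = ‖M' ^ k‖ := by
    rw [hM', show M.map (algebraMap ℝ ℂ) = (algebraMap ℝ ℂ).mapMatrix M from rfl,
      ← map_pow, RingHom.mapMatrix_apply]
    exact (normMapAlg (M ^ k)).symm
  rw [hmap]
  rcases lt_or_ge k K' with h | h
  · have h1 : ‖M' ^ k‖ / r ^ k ≤ C - 1 := by
      rw [hC, add_sub_cancel_right]
      exact Finset.single_le_sum (f := fun k => ‖M' ^ k‖ / r ^ k)
        (fun i _ => div_nonneg (norm_nonneg _) (pow_nonneg hr0.le _)) (Finset.mem_range.2 h)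
    have hrk : (0:ℝ) < r ^ k := pow_pos hr0 _
    calc ‖M' ^ k‖ = (‖M' ^ k‖ / r ^ k) * r ^ k := by field_simp
      _ ≤ (C - 1) * r ^ k := mul_le_mul_of_nonneg_right h1 hrk.le
      _ ≤ C * r ^ k := mul_le_mul_of_nonneg_right (by linarith) hrk.le
  · calc ‖M' ^ k‖ ≤ r ^ k := key k h
      _ = 1 * r ^ k := (one_mul _).symm
      _ ≤ C * r ^ k := mul_le_mul_of_nonneg_right hC1 (pow_nonneg hr0.le _)
end A
section B
variable {ι : Type*} [Fintype ι] [DecidableEq ι] [Nonempty ι]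

lemma rs_pow {P : Matrix ι ι ℝ} (hP : RowStochastic P) (k : ℕ) : RowStochastic (P ^ k) := by
  induction k with
  | zero =>
    refine ⟨fun i j => ?_, fun i => ?_⟩
    · rw [pow_zero]; by_cases h : i = j <;> simp [Matrix.one_apply, h]
    · rw [pow_zero]; simp [Matrix.one_apply]
  | succ k ih =>
    rw [pow_succ]
    refine ⟨fun i j => ?_, fun i => ?_⟩
    · rw [Matrix.mul_apply]
      exact Finset.sum_nonneg fun t _ => mul_nonneg (ih.1 i t) (hP.1 t j)
    · simp only [Matrix.mul_apply]
      rw [Finset.sum_comm]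
      calc ∑ t, ∑ j, (P ^ k) i t * P t j = ∑ t, (P ^ k) i t * ∑ j, P t j := by
            simp [Finset.mul_sum]
        _ = 1 := by simp [hP.2, ih.2 i]

lemma sum_vecMul_eq {Q : Matrix ι ι ℝ} (hQ : RowStochastic Q) (u : ι → ℝ) :
    ∑ j, (u ᵥ* Q) j = ∑ i, u i := by
  simp only [Matrix.vecMul, dotProduct]
  rw [Finset.sum_comm]
  calc ∑ i, ∑ j, u i * Q i j = ∑ i, u i * ∑ j, Q i j := by simp [Finset.mul_sum]
    _ = ∑ i, u i := by simp [hQ.2]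

lemma dob {Q : Matrix ι ι ℝ} (hQ : RowStochastic Q) (δ : ℝ) (hδ : ∀ i j, δ ≤ Q i j)
    (u : ι → ℝ) (hu : ∑ i, u i = 0) :
    ∑ j, |(u ᵥ* Q) j| ≤ (1 - (Fintype.card ι : ℝ) * δ) * ∑ i, |u i| := by
  have key : ∀ j, |(u ᵥ* Q) j| ≤ ∑ i, |u i| * (Q i j - δ) := by
    intro j
    have h1 : (u ᵥ* Q) j = ∑ i, u i * (Q i j - δ) := by
      simp only [Matrix.vecMul, dotProduct, mul_sub]
      rw [Finset.sum_sub_distrib, ← Finset.sum_mul, hu, zero_mul, sub_zero]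
    rw [h1]
    refine (Finset.abs_sum_le_sum_abs _ _).trans (Finset.sum_le_sum fun i _ => ?_)
    rw [abs_mul, abs_of_nonneg (sub_nonneg.2 (hδ i j))]
  calc ∑ j, |(u ᵥ* Q) j| ≤ ∑ j, ∑ i, |u i| * (Q i j - δ) :=
        Finset.sum_le_sum fun j _ => key j
    _ = ∑ i, ∑ j, |u i| * (Q i j - δ) := Finset.sum_comm
    _ = ∑ i, |u i| * (1 - (Fintype.card ι : ℝ) * δ) := by
        refine Finset.sum_congr rfl fun i _ => ?_
        rw [← Finset.mul_sum, Finset.sum_sub_distrib, hQ.2 i, Finset.sum_const,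
          Finset.card_univ, nsmul_eq_mul]
    _ = (1 - (Fintype.card ι : ℝ) * δ) * ∑ i, |u i| := by
        rw [← Finset.sum_mul, mul_comm]

lemma stepB {P : Matrix ι ι ℝ} (hP : RowStochastic P)
    (hprim : ∃ k, ∀ i j, 0 < (P ^ k) i j)
    (π0 πs : ι → ℝ) (hπ0 : ∑ i, π0 i = 1) (hπs : ∑ i, πs i = 1)
    (hstat : πs ᵥ* P = πs) :
    ∃ B c : ℝ, 0 ≤ B ∧ 0 < c ∧ c < 1 ∧
      ∀ ℓ, ∑ i, |(π0 ᵥ* P ^ ℓ) i - πs i| ≤ B * c ^ ℓ := by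
  -- upgrade to positive exponent
  obtain ⟨k, hk⟩ := hprim
  have hprim' : ∃ k0, 1 ≤ k0 ∧ ∀ i j, 0 < (P ^ k0) i j := by
    rcases Nat.eq_zero_or_pos k with rfl | hkpos
    · refine ⟨1, le_refl 1, fun i j => ?_⟩
      have hij : ∀ i' j' : ι, i' = j' := by
        intro i' j'
        by_contra h
        have := hk i' j'
        rw [pow_zero, Matrix.one_apply_ne h] at this
        exact lt_irrefl 0 this
      have hji : j = i := hij j i
      subst hji
      have hsum : ∑ j', P j j' = 1 := hP.2 j
      have hall : ∀ j' : ι, j' = j := fun j' => hij j' j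
      have hcard : (Finset.univ : Finset ι) = {j} := by
        ext x; simp [hall x]
      rw [hcard, Finset.sum_singleton] at hsum
      rw [pow_one, hsum]; exact one_pos
    · exact ⟨k, hkpos, hk⟩
  obtain ⟨k0, hk01, hpos⟩ := hprim'
  -- minimum entry
  have huniv : (Finset.univ : Finset (ι × ι)).Nonempty := Finset.univ_nonempty
  set δ : ℝ := Finset.univ.inf' huniv (fun p : ι × ι => (P ^ k0) p.1 p.2) with hδdef
  have hδpos : 0 < δ := by
    rw [hδdef, Finset.lt_inf'_iff]
    exact fun p _ => hpos p.1 p.2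
  have hδle : ∀ i j, δ ≤ (P ^ k0) i j := fun i j =>
    Finset.inf'_le _ (Finset.mem_univ (i, j))
  set N : ℝ := (Fintype.card ι : ℝ) with hN
  have hNpos : 0 < N := by
    rw [hN]; exact_mod_cast Fintype.card_pos
  set q : ℝ := 1 - N * δ with hq
  have hQ : RowStochastic (P ^ k0) := rs_pow hP k0
  have hq0 : 0 ≤ q := by
    obtain ⟨i⟩ := ‹Nonempty ι›
    have h1 : N * δ = ∑ _j : ι, δ := by
      rw [Finset.sum_const, Finset.card_univ, nsmul_eq_mul, hN]
    have h2 : ∑ _j : ι, δ ≤ ∑ j, (P ^ k0) i j := Finset.sum_le_sum fun j _ => hδle i j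
    rw [hq]; rw [hQ.2 i] at h2; linarith [h1 ▸ h2]
  have hq1 : q < 1 := by
    rw [hq]; nlinarith
  -- error sequence
  set Δ : ι → ℝ := fun i => π0 i - πs i with hΔ
  set E : ℕ → ℝ := fun ℓ => ∑ i, |(Δ ᵥ* P ^ ℓ) i| with hE
  have hπsP : ∀ ℓ, πs ᵥ* P ^ ℓ = πs := by
    intro ℓ
    induction ℓ with
    | zero => simp [pow_zero]
    | succ ℓ ih => rw [pow_succ, ← Matrix.vecMul_vecMul, ih, hstat]
  have hdiff : ∀ ℓ i, (π0 ᵥ* P ^ ℓ) i - πs i = (Δ ᵥ* P ^ ℓ) i := by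
    intro ℓ i
    have : Δ ᵥ* P ^ ℓ = π0 ᵥ* P ^ ℓ - πs ᵥ* P ^ ℓ := by
      rw [hΔ, show (fun i => π0 i - πs i) = π0 - πs from rfl, Matrix.sub_vecMul]
    rw [this, hπsP ℓ]; simp
  have hsum0 : ∀ ℓ, ∑ i, (Δ ᵥ* P ^ ℓ) i = 0 := by
    intro ℓ
    induction ℓ with
    | zero =>
      simp only [pow_zero, Matrix.vecMul_one]
      rw [hΔ]
      simp [Finset.sum_sub_distrib, hπ0, hπs]
    | succ ℓ ih =>
      rw [pow_succ, ← Matrix.vecMul_vecMul]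
      rw [sum_vecMul_eq hP _]; exact ih
  have hmono : ∀ ℓ m, E (ℓ + m) ≤ E ℓ := by
    intro ℓ m
    induction m with
    | zero => simpa using le_refl (E ℓ)
    | succ m ih =>
      have : E (ℓ + (m + 1)) ≤ E (ℓ + m) := by
        have h1 : Δ ᵥ* P ^ (ℓ + (m + 1)) = (Δ ᵥ* P ^ (ℓ + m)) ᵥ* P := by
          rw [Matrix.vecMul_vecMul, ← pow_succ, show ℓ + (m + 1) = ℓ + m + 1 by ring]
        rw [hE]
        simp only
        rw [h1]
        have := dob hP 0 (fun i j => hP.1 i j) (Δ ᵥ* P ^ (ℓ + m)) (hsum0 (ℓ + m))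
        simpa using this
      exact this.trans ih
  have hcontr : ∀ ℓ, E (ℓ + k0) ≤ q * E ℓ := by
    intro ℓ
    have h1 : Δ ᵥ* P ^ (ℓ + k0) = (Δ ᵥ* P ^ ℓ) ᵥ* P ^ k0 := by
      rw [Matrix.vecMul_vecMul, ← pow_add]
    rw [hE]; simp only
    rw [h1]
    have := dob hQ δ hδle (Δ ᵥ* P ^ ℓ) (hsum0 ℓ)
    rw [← hN, ← hq] at this
    exact this
  have hgeom : ∀ m, E (k0 * m) ≤ q ^ m * E 0 := by
    intro m
    induction m with
    | zero => simp
    | succ m ih =>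
      have h1 : k0 * (m + 1) = k0 * m + k0 := by ring
      rw [h1]
      calc E (k0 * m + k0) ≤ q * E (k0 * m) := hcontr (k0 * m)
        _ ≤ q * (q ^ m * E 0) := mul_le_mul_of_nonneg_left ih hq0
        _ = q ^ (m + 1) * E 0 := by ring
  have hE0 : 0 ≤ E 0 := Finset.sum_nonneg fun i _ => abs_nonneg _
  have hEnonneg : ∀ ℓ, 0 ≤ E ℓ := fun ℓ => Finset.sum_nonneg fun i _ => abs_nonneg _
  have hEdiv : ∀ ℓ, E ℓ ≤ q ^ (ℓ / k0) * E 0 := by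
    intro ℓ
    have h1 : k0 * (ℓ / k0) ≤ ℓ := Nat.mul_div_le ℓ k0
    have h2 : E ℓ = E (k0 * (ℓ / k0) + (ℓ - k0 * (ℓ / k0))) := by
      congr 1; omega
    rw [h2]
    exact (hmono _ _).trans (hgeom _)
  -- geometric envelope
  set c : ℝ := max (q ^ (1 / (k0 : ℝ))) (1 / 2) with hc
  have hcpos : 0 < c := lt_of_lt_of_le one_half_pos (le_max_right _ _)
  have hc1 : c < 1 := by
    rw [hc]
    refine max_lt ?_ one_half_lt_one
    rcases eq_or_lt_of_le hq0 with h | h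
    · rw [← h, Real.zero_rpow]; · exact one_pos
      · positivity
    · exact Real.rpow_lt_one hq0 hq1 (by positivity)
  have hqc : q ≤ c ^ k0 := by
    have h1 : (q ^ (1 / (k0 : ℝ))) ^ k0 ≤ c ^ k0 :=
      pow_le_pow_left₀ (Real.rpow_nonneg hq0 _) (le_max_left _ _) k0
    refine le_trans (le_of_eq ?_) h1
    rw [← Real.rpow_natCast (q ^ (1 / (k0 : ℝ))) k0, ← Real.rpow_mul hq0,
      one_div, inv_mul_cancel₀ (by exact_mod_cast Nat.one_le_iff_ne_zero.mp hk01 : (k0:ℝ) ≠ 0),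
      Real.rpow_one]
  refine ⟨E 0 / c ^ k0, c, div_nonneg hE0 (pow_pos hcpos _).le, hcpos, hc1, fun ℓ => ?_⟩
  have hq_pow : q ^ (ℓ / k0) ≤ (c ^ k0) ^ (ℓ / k0) :=
    pow_le_pow_left₀ hq0 hqc _
  have hexp : (c ^ k0) ^ (ℓ / k0) = c ^ (k0 * (ℓ / k0)) := by rw [← pow_mul]
  have hexp2 : c ^ (k0 * (ℓ / k0)) ≤ c ^ (ℓ - k0) := by
    refine pow_le_pow_of_le_one hcpos.le hc1.le ?_
    have h1 := Nat.div_add_mod ℓ k0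
    have h2 := Nat.mod_lt ℓ (by omega : 0 < k0)
    omega
  have hexp3 : c ^ (ℓ - k0) * c ^ k0 ≤ c ^ ℓ := by
    rw [← pow_add]
    exact pow_le_pow_of_le_one hcpos.le hc1.le (by omega)
  have key : E ℓ ≤ E 0 / c ^ k0 * c ^ ℓ := by
    have h4 : E ℓ ≤ c ^ (ℓ - k0) * E 0 := by
      calc E ℓ ≤ q ^ (ℓ / k0) * E 0 := hEdiv ℓ
        _ ≤ c ^ (ℓ - k0) * E 0 := by
            refine mul_le_mul_of_nonneg_right ?_ hE0
            calc q ^ (ℓ / k0) ≤ (c ^ k0) ^ (ℓ / k0) := hq_pow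
              _ = c ^ (k0 * (ℓ / k0)) := hexp
              _ ≤ c ^ (ℓ - k0) := hexp2
    have h5 : c ^ (ℓ - k0) ≤ c ^ ℓ / c ^ k0 := by
      rw [le_div_iff₀ (pow_pos hcpos _)]
      exact hexp3
    calc E ℓ ≤ c ^ (ℓ - k0) * E 0 := h4
      _ ≤ (c ^ ℓ / c ^ k0) * E 0 := mul_le_mul_of_nonneg_right h5 hE0
      _ = E 0 / c ^ k0 * c ^ ℓ := by ring
  calc ∑ i, |(π0 ᵥ* P ^ ℓ) i - πs i| = E ℓ := by
        rw [hE]; exact Finset.sum_congr rfl fun i _ => by rw [hdiff ℓ i]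
    _ ≤ E 0 / c ^ k0 * c ^ ℓ := key
end B
section Main
variable {n : ℕ}
attribute [local instance] Matrix.linftyOpNormedAddCommGroup Matrix.linftyOpNormedRing
  Matrix.linftyOpNormedAlgebra

set_option maxHeartbeats 1000000 in
theorem stmt16 {n : ℕ} (M : Matrix (Fin n) (Fin n) ℝ) (hM : specRad M < 1)
    (a : Fin n → ℝ)
    (P : Matrix (Fin n → Bool) (Fin n → Bool) ℝ) (hP : RowStochastic P)
    (hprim : ∃ k, ∀ i j, 0 < (P ^ k) i j)
    (π0 πs : (Fin n → Bool) → ℝ)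
    (hπ0 : (∀ i, 0 ≤ π0 i) ∧ ∑ i, π0 i = 1)
    (hπs : (∀ i, 0 ≤ πs i) ∧ ∑ i, πs i = 1)
    (hstat : πs ᵥ* P = πs)
    (d : (Fin n → Bool) → Fin n → ℝ)
    (hd : ∀ i r, d i r = if i r then 1 else 0)
    (S : (Fin n → Bool) × Fin n → ℝ)
    (hS : ∀ i r, S (i, r) = (Matrix.diagonal (d i) *ᵥ a) r)
    (μ0 : Fin n → ℝ) :
    Tendsto (fun k => M ^ k *ᵥ μ0 +
        ∑ ℓ ∈ Finset.range k,
          M ^ (k - 1 - ℓ) *ᵥ (fun r => ∑ i, (π0 ᵥ* P ^ ℓ) i * S (i, r)))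
      atTop (nhds ((1 - M)⁻¹ *ᵥ ∑ i, πs i • (Matrix.diagonal (d i) *ᵥ a))) := by
  rcases Nat.eq_zero_or_pos n with rfl | hn
  · have hsub : ∀ y z : Fin 0 → ℝ, y = z := fun y z => funext fun i => i.elim0
    have he : (fun k : ℕ => M ^ k *ᵥ μ0 + ∑ ℓ ∈ Finset.range k,
        M ^ (k - 1 - ℓ) *ᵥ (fun r => ∑ i, (π0 ᵥ* P ^ ℓ) i * S (i, r)))
        = fun _ => (1 - M)⁻¹ *ᵥ ∑ i, πs i • (Matrix.diagonal (d i) *ᵥ a) :=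
      funext fun k => hsub _ _
    rw [he]; exact tendsto_const_nhds
  haveI : CompleteSpace (Matrix (Fin n) (Fin n) ℝ) := FiniteDimensional.complete ℝ _
  obtain ⟨C, r, hC0, hr0, hr1, hCr⟩ := stepA hn M hM
  obtain ⟨B, c, hB0, hc0, hc1, hBc⟩ := stepB hP hprim π0 πs hπ0.2 hπs.2 hstat
  set w : (Fin n → Bool) → Fin n → ℝ := fun i => Matrix.diagonal (d i) *ᵥ a with hw
  set b : Fin n → ℝ := ∑ i, πs i • w i with hb
  set v : ℕ → Fin n → ℝ := fun ℓ r => ∑ i, (π0 ᵥ* P ^ ℓ) i * S (i, r) with hv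
  -- bound on w
  have hwle : ∀ (i) (r : Fin n), |w i r| ≤ ‖a‖ := by
    intro i r
    rw [hw]; simp only [Matrix.mulVec_diagonal]
    rw [abs_mul]
    have h1 : |d i r| ≤ 1 := by rw [hd i r]; split <;> norm_num
    have h2 : |a r| ≤ ‖a‖ := by rw [← Real.norm_eq_abs]; exact norm_le_pi_norm a r
    calc |d i r| * |a r| ≤ 1 * ‖a‖ := mul_le_mul h1 h2 (abs_nonneg _) one_pos.le
      _ = ‖a‖ := one_mul _
  have hvb : ∀ ℓ, ‖v ℓ - b‖ ≤ B * ‖a‖ * c ^ ℓ := by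
    intro ℓ
    have hrhs : 0 ≤ B * ‖a‖ * c ^ ℓ := by positivity
    rw [pi_norm_le_iff_of_nonneg hrhs]
    intro t
    have h1 : (v ℓ - b) t = ∑ i, ((π0 ᵥ* P ^ ℓ) i - πs i) * w i t := by
      simp only [Pi.sub_apply, hv, hb, Finset.sum_apply, Pi.smul_apply, smul_eq_mul]
      rw [← Finset.sum_sub_distrib]
      refine Finset.sum_congr rfl fun i _ => ?_
      rw [hS i t, sub_mul, hw]
    rw [Real.norm_eq_abs, h1]
    calc |∑ i, ((π0 ᵥ* P ^ ℓ) i - πs i) * w i t|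
        ≤ ∑ i, |((π0 ᵥ* P ^ ℓ) i - πs i) * w i t| := Finset.abs_sum_le_sum_abs _ _
      _ ≤ ∑ i, |(π0 ᵥ* P ^ ℓ) i - πs i| * ‖a‖ := by
          refine Finset.sum_le_sum fun i _ => ?_
          rw [abs_mul]
          exact mul_le_mul_of_nonneg_left (hwle i t) (abs_nonneg _)
      _ = (∑ i, |(π0 ᵥ* P ^ ℓ) i - πs i|) * ‖a‖ := by rw [← Finset.sum_mul]
      _ ≤ (B * c ^ ℓ) * ‖a‖ := mul_le_mul_of_nonneg_right (hBc ℓ) (norm_nonneg _)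
      _ = B * ‖a‖ * c ^ ℓ := by ring
  -- geometric matrix series
  have hsumM : Summable (fun j : ℕ => M ^ j) :=
    Summable.of_norm_bounded ((summable_geometric_of_lt_one hr0.le hr1).mul_left C) hCr
  set T := ∑' j : ℕ, M ^ j with hT
  have hgeo : Tendsto (fun k : ℕ => C * r ^ k) atTop (𝓝 0) := by
    have h := tendsto_pow_atTop_nhds_zero_of_lt_one hr0.le hr1
    simpa using h.const_mul C
  have hMk0 : Tendsto (fun k => M ^ k) atTop (𝓝 0) := squeeze_zero_norm hCr hgeo
  have hTinv : (1 - M)⁻¹ = T := by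
    have hsum1 : Summable (fun j : ℕ => M ^ (j + 1)) := (summable_nat_add_iff 1).mpr hsumM
    have h2 : ∑' j : ℕ, M ^ (j + 1) = T - 1 := by
      have h0 := Summable.tsum_eq_zero_add hsumM
      rw [pow_zero, ← hT] at h0
      rw [h0]; abel
    have h3 : (1 - M) * T = 1 := by
      have h4 : (1 - M) * T = ∑' j : ℕ, (1 - M) * M ^ j := (hsumM.tsum_mul_left (1 - M)).symm
      have h5 : ∀ j : ℕ, (1 - M) * M ^ j = M ^ j - M ^ (j + 1) := by
        intro j; rw [sub_mul, one_mul, ← pow_succ']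
      rw [h4, tsum_congr h5, Summable.tsum_sub hsumM hsum1, h2, ← hT]; abel
    exact Matrix.inv_eq_right_inv h3
  have hTpartial : Tendsto (fun k => ∑ j ∈ Finset.range k, M ^ j) atTop (𝓝 T) :=
    hsumM.hasSum.tendsto_sum_nat
  -- linear map A ↦ A *ᵥ b
  have hlin : IsLinearMap ℝ (fun A : Matrix (Fin n) (Fin n) ℝ => A *ᵥ b) :=
    ⟨fun A A' => Matrix.add_mulVec A A' b, fun cc A => Matrix.smul_mulVec cc A b⟩
  set L : Matrix (Fin n) (Fin n) ℝ →ₗ[ℝ] (Fin n → ℝ) := IsLinearMap.mk' _ hlin with hL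
  have hLcont : Continuous L := L.continuous_of_finiteDimensional
  have hf3 : Tendsto (fun k => (∑ j ∈ Finset.range k, M ^ j) *ᵥ b) atTop (𝓝 (T *ᵥ b)) :=
    ((hLcont.tendsto T).comp hTpartial : _)
  have hf1 : Tendsto (fun k => M ^ k *ᵥ μ0) atTop (𝓝 0) := by
    have hbound : ∀ k : ℕ, ‖M ^ k *ᵥ μ0‖ ≤ C * r ^ k * ‖μ0‖ := fun k =>
      (Matrix.linfty_opNorm_mulVec _ _).trans
        (mul_le_mul_of_nonneg_right (hCr k) (norm_nonneg μ0))
    have hg : Tendsto (fun k : ℕ => C * r ^ k * ‖μ0‖) atTop (𝓝 0) := by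
      simpa using hgeo.mul_const ‖μ0‖
    exact squeeze_zero_norm hbound hg
  -- f2
  set ρ : ℝ := max r c with hρ
  have hρ0 : 0 < ρ := lt_of_lt_of_le hr0 (le_max_left _ _)
  have hρ1 : ρ < 1 := max_lt hr1 hc1
  have hf2 : Tendsto (fun k => ∑ j ∈ Finset.range k, M ^ j *ᵥ (v (k - 1 - j) - b))
      atTop (𝓝 0) := by
    have hg : Tendsto (fun k : ℕ => C * (B * ‖a‖) / ρ * ((k : ℝ) ^ 1 * ρ ^ k)) atTop (𝓝 0) := by
      have hsum2 := (summable_pow_mul_geometric_of_norm_lt_one 1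
        (by rw [Real.norm_eq_abs, abs_of_nonneg hρ0.le]; exact hρ1 : ‖ρ‖ < 1)).tendsto_atTop_zero
      simpa using hsum2.const_mul (C * (B * ‖a‖) / ρ)
    refine squeeze_zero_norm (fun k => ?_) hg
    calc ‖∑ j ∈ Finset.range k, M ^ j *ᵥ (v (k - 1 - j) - b)‖
        ≤ ∑ j ∈ Finset.range k, ‖M ^ j *ᵥ (v (k - 1 - j) - b)‖ := norm_sum_le _ _
      _ ≤ ∑ j ∈ Finset.range k, C * (B * ‖a‖) / ρ * ρ ^ k := by
          refine Finset.sum_le_sum fun j hj => ?_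
          have hjk := Finset.mem_range.mp hj
          have step1 : ‖M ^ j *ᵥ (v (k - 1 - j) - b)‖
              ≤ (C * r ^ j) * (B * ‖a‖ * c ^ (k - 1 - j)) :=
            (Matrix.linfty_opNorm_mulVec _ _).trans
              (mul_le_mul (hCr j) (hvb _) (norm_nonneg _) (by positivity))
          have step2 : r ^ j * c ^ (k - 1 - j) ≤ ρ ^ (k - 1) := by
            have h1 : r ^ j ≤ ρ ^ j := pow_le_pow_left₀ hr0.le (le_max_left _ _) j
            have h2 : c ^ (k - 1 - j) ≤ ρ ^ (k - 1 - j) :=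
              pow_le_pow_left₀ hc0.le (le_max_right _ _) _
            have h3 : j + (k - 1 - j) = k - 1 := by omega
            calc r ^ j * c ^ (k - 1 - j) ≤ ρ ^ j * ρ ^ (k - 1 - j) :=
                  mul_le_mul h1 h2 (pow_nonneg hc0.le _) (pow_nonneg hρ0.le _)
              _ = ρ ^ (k - 1) := by rw [← pow_add, h3]
          have step3 : ρ ^ (k - 1) = ρ ^ k / ρ := by
            rw [eq_div_iff hρ0.ne', ← pow_succ]
            congr 1; omega
          calc ‖M ^ j *ᵥ (v (k - 1 - j) - b)‖
              ≤ (C * r ^ j) * (B * ‖a‖ * c ^ (k - 1 - j)) := step1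
            _ = C * (B * ‖a‖) * (r ^ j * c ^ (k - 1 - j)) := by ring
            _ ≤ C * (B * ‖a‖) * ρ ^ (k - 1) := by
                refine mul_le_mul_of_nonneg_left step2 ?_
                positivity
            _ = C * (B * ‖a‖) / ρ * ρ ^ k := by rw [step3]; ring
      _ = (k : ℝ) * (C * (B * ‖a‖) / ρ * ρ ^ k) := by
          rw [Finset.sum_const, Finset.card_range, nsmul_eq_mul]
      _ = C * (B * ‖a‖) / ρ * ((k : ℝ) ^ 1 * ρ ^ k) := by ring
  -- assemble
  have heq : ∀ k : ℕ, (M ^ k *ᵥ μ0 + ∑ ℓ ∈ Finset.range k, M ^ (k - 1 - ℓ) *ᵥ v ℓ)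
      = M ^ k *ᵥ μ0 + (∑ j ∈ Finset.range k, M ^ j *ᵥ (v (k - 1 - j) - b)
        + (∑ j ∈ Finset.range k, M ^ j) *ᵥ b) := by
    intro k
    congr 1
    have h1 : ∑ ℓ ∈ Finset.range k, M ^ (k - 1 - ℓ) *ᵥ v ℓ
        = ∑ j ∈ Finset.range k, M ^ j *ᵥ v (k - 1 - j) := by
      rw [← Finset.sum_range_reflect (fun ℓ => M ^ (k - 1 - ℓ) *ᵥ v ℓ) k]
      refine Finset.sum_congr rfl fun j hj => ?_
      have hj' : k - 1 - (k - 1 - j) = j := by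
        have := Finset.mem_range.mp hj; omega
      rw [hj']
    rw [h1]
    have h2 : ∀ j, M ^ j *ᵥ v (k - 1 - j)
        = M ^ j *ᵥ (v (k - 1 - j) - b) + M ^ j *ᵥ b := by
      intro j; rw [← Matrix.mulVec_add, sub_add_cancel]
    rw [Finset.sum_congr rfl fun j _ => h2 j, Finset.sum_add_distrib]
    congr 1
    rw [show (∑ j ∈ Finset.range k, M ^ j) *ᵥ b = L (∑ j ∈ Finset.range k, M ^ j) from rfl,
      map_sum]
    rfl
  rw [hTinv]
  have hfinal := hf1.add (hf2.add hf3)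
  rw [zero_add, zero_add] at hfinal
  exact hfinal.congr fun k => (heq k).symm
end Main
end
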